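/- (η-weighted advantage telescoping identity.) In the finite MDP setting with weights η : ℕ → ℝ, η(k) ≥ 0, ∑_k η(k) = 1, let c : S × A → ℝ, let p₀ ∈ PMF S, and let π and π' be policies. Define v_{π'}(s) = ∑_t γ^t ∑_{(s',a')} P^t_{π'}((s',a')|s)·c(s',a') and the advantage A_{π'}(s,a) = c(s,a) + γ ∑_{s'} 𝒫(s,a)(s')·v_{π'}(s') − v_{π'}(s). Then ∑_{s₀} p₀(s₀) ∑_{(s,a)} μ_π((s,a)|s₀)·A_{π'}(s,a) = ∑_{s₀} p₀(s₀) ∑_{(s,a)} μ_π((s,a)|s₀)·c(s,a) − ∑_{s₀} p₀(s₀) ∑_{(s,a)} P^η_π((s,a)|s₀)·v_{π'}(s). -/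

import Mathlib

open scoped BigOperators Classical

/-- `n`-step state–action distribution of the stationary policy `π` started at a state. -/
noncomputable def PstepS {S A : Type*} [Fintype S] [Fintype A]
    (P : S × A → PMF S) (π : S → PMF A) : ℕ → S → S × A → ℝ
  | 0, s₀, x => if x.1 = s₀ then (π x.1 x.2).toReal else 0
  | n + 1, s₀, x => ∑ y : S × A, PstepS P π n s₀ y * (P y x.1).toReal * (π x.1 x.2).toReal

/-- `n`-step state–action distribution of `π` started at a state–action pair. -/
noncomputable def PstepSA {S A : Type*} [Fintype S] [Fintype A]
    (P : S × A → PMF S) (π : S → PMF A) : ℕ → S × A → S × A → ℝ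
  | 0, y, x => if x = y then 1 else 0
  | n + 1, y, x => ∑ z : S × A, PstepSA P π n y z * (P z x.1).toReal * (π x.1 x.2).toReal

/-- η-weighted future state distribution, started at a state. -/
noncomputable def PetaS {S A : Type*} [Fintype S] [Fintype A]
    (P : S × A → PMF S) (π : S → PMF A) (η : ℕ → ℝ) (s₀ : S) (x : S × A) : ℝ :=
  ∑' k, η k * PstepS P π k s₀ x

/-- η-weighted future state distribution, started at a state–action pair. -/
noncomputable def PetaSA {S A : Type*} [Fintype S] [Fintype A]
    (P : S × A → PMF S) (π : S → PMF A) (η : ℕ → ℝ) (y : S × A) (x : S × A) : ℝ :=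
  ∑' k, η k * PstepSA P π k y x

/-- γ-discounted occupancy measure, started at a state. -/
noncomputable def rhoS {S A : Type*} [Fintype S] [Fintype A]
    (P : S × A → PMF S) (π : S → PMF A) (γ : ℝ) (s₀ : S) (x : S × A) : ℝ :=
  ∑' t, γ ^ t * PstepS P π t s₀ x

/-- γ-discounted occupancy measure, started at a state–action pair. -/
noncomputable def rhoSA {S A : Type*} [Fintype S] [Fintype A]
    (P : S × A → PMF S) (π : S → PMF A) (γ : ℝ) (y : S × A) (x : S × A) : ℝ :=
  ∑' t, γ ^ t * PstepSA P π t y x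

/-- η-weighted, γ-discounted future occupancy measure `μ_π`. -/
noncomputable def muS {S A : Type*} [Fintype S] [Fintype A]
    (P : S × A → PMF S) (π : S → PMF A) (γ : ℝ) (η : ℕ → ℝ) (s₀ : S) (x : S × A) : ℝ :=
  ∑' t, ∑' k, γ ^ t * η k * PstepS P π (t + k) s₀ x

/-- State value function `v_π(s) = ∑_t γ^t ∑_{(s',a')} P^t_π((s',a')|s) c(s',a')`. -/
noncomputable def vVal {S A : Type*} [Fintype S] [Fintype A]
    (P : S × A → PMF S) (π : S → PMF A) (γ : ℝ) (c : S × A → ℝ) (s : S) : ℝ :=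
  ∑' t, γ ^ t * ∑ x : S × A, PstepS P π t s x * c x

/-- Advantage function `A_π(s,a) = c(s,a) + γ E_{s'|s,a}[v_π(s')] − v_π(s)`. -/
noncomputable def advVal {S A : Type*} [Fintype S] [Fintype A]
    (P : S × A → PMF S) (π : S → PMF A) (γ : ℝ) (c : S × A → ℝ) (x : S × A) : ℝ :=
  c x + γ * (∑ s' : S, (P x s').toReal * vVal P π γ c s') - vVal P π γ c x.1

section work
variable {S A : Type*} [Fintype S] [Fintype A]

lemma pmf_sum_toReal {α : Type*} [Fintype α] (p : PMF α) :
    ∑ a : α, (p a).toReal = 1 := by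
  have h := p.tsum_coe
  rw [tsum_fintype] at h
  rw [← ENNReal.toReal_sum (fun a _ => PMF.apply_ne_top p a), h, ENNReal.toReal_one]

variable (P : S × A → PMF S) (π : S → PMF A)

lemma PstepS_nonneg (n : ℕ) (s₀ : S) (x : S × A) : 0 ≤ PstepS P π n s₀ x := by
  induction n generalizing x with
  | zero =>
    simp only [PstepS]
    split <;> positivity
  | succ n ih =>
    exact Finset.sum_nonneg fun y _ =>
      mul_nonneg (mul_nonneg (ih y) ENNReal.toReal_nonneg) ENNReal.toReal_nonneg

lemma PstepS_sum (n : ℕ) (s₀ : S) : ∑ x : S × A, PstepS P π n s₀ x = 1 := by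
  induction n with
  | zero =>
    simp only [PstepS]
    rw [Fintype.sum_prod_type]
    have h : ∀ s : S, (∑ a : A, if s = s₀ then (π s a).toReal else 0)
        = if s = s₀ then 1 else 0 := by
      intro s
      split
      · exact pmf_sum_toReal (π s)
      · simp
    simp only [h]
    simp
  | succ n ih =>
    simp only [PstepS]
    rw [Finset.sum_comm]
    have h : ∀ y : S × A, ∑ x : S × A,
        PstepS P π n s₀ y * (P y x.1).toReal * (π x.1 x.2).toReal
        = PstepS P π n s₀ y := by
      intro y
      rw [Fintype.sum_prod_type]
      have h1 : ∀ s' : S, ∑ a' : A,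
          PstepS P π n s₀ y * (P y s').toReal * (π s' a').toReal
          = PstepS P π n s₀ y * (P y s').toReal := by
        intro s'
        rw [← Finset.mul_sum, pmf_sum_toReal, mul_one]
      simp only [h1]
      rw [← Finset.mul_sum, pmf_sum_toReal, mul_one]
    simp only [h]
    exact ih

lemma PstepS_le_one (n : ℕ) (s₀ : S) (x : S × A) : PstepS P π n s₀ x ≤ 1 := by
  calc PstepS P π n s₀ x ≤ ∑ y : S × A, PstepS P π n s₀ y :=
        Finset.single_le_sum (fun y _ => PstepS_nonneg P π n s₀ y) (Finset.mem_univ x)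
    _ = 1 := PstepS_sum P π n s₀

/-- one-step expansion -/
lemma PstepS_step (n : ℕ) (s₀ : S) (v : S → ℝ) :
    ∑ x : S × A, PstepS P π (n + 1) s₀ x * v x.1
      = ∑ y : S × A, PstepS P π n s₀ y * ∑ s' : S, (P y s').toReal * v s' := by
  simp only [PstepS, Finset.sum_mul]
  rw [Finset.sum_comm]
  refine Finset.sum_congr rfl fun y _ => ?_
  rw [Fintype.sum_prod_type]
  have h1 : ∀ s' : S, ∑ a' : A,
      PstepS P π n s₀ y * (P y s').toReal * (π s' a').toReal * v s'
      = PstepS P π n s₀ y * ((P y s').toReal * v s') := by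
    intro s'
    have : ∀ a' : A, PstepS P π n s₀ y * (P y s').toReal * (π s' a').toReal * v s'
        = PstepS P π n s₀ y * ((P y s').toReal * v s') * (π s' a').toReal := by
      intro a'; ring
    simp only [this]
    rw [← Finset.mul_sum, pmf_sum_toReal, mul_one]
  simp only [h1]
  rw [← Finset.mul_sum]

end work

section tele
variable {S A : Type*} [Fintype S] [Fintype A]
variable (P : S × A → PMF S) (π : S → PMF A)

/-- expectation of `f` under the `n`-step distribution -/
noncomputable def Tf (P : S × A → PMF S) (π : S → PMF A) (s₀ : S)
    (f : S × A → ℝ) (n : ℕ) : ℝ :=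
  ∑ x : S × A, PstepS P π n s₀ x * f x

lemma Tf_abs_le (s₀ : S) (f : S × A → ℝ) (n : ℕ) :
    |Tf P π s₀ f n| ≤ ∑ x : S × A, |f x| := by
  calc |Tf P π s₀ f n| ≤ ∑ x : S × A, |PstepS P π n s₀ x * f x| :=
        Finset.abs_sum_le_sum_abs _ _
    _ ≤ ∑ x : S × A, |f x| := by
        refine Finset.sum_le_sum fun x _ => ?_
        rw [abs_mul, abs_of_nonneg (PstepS_nonneg P π n s₀ x)]
        calc PstepS P π n s₀ x * |f x| ≤ 1 * |f x| :=
              mul_le_mul_of_nonneg_right (PstepS_le_one P π n s₀ x) (abs_nonneg _)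
          _ = |f x| := one_mul _

variable {γ : ℝ} {η : ℕ → ℝ}

lemma summable_inner (hγ0 : 0 ≤ γ) (hη0 : ∀ k, 0 ≤ η k) (hηs : Summable η)
    {u : ℕ → ℝ} {M : ℝ} (hu : ∀ n, |u n| ≤ M) (t : ℕ) :
    Summable (fun k => γ ^ t * η k * u (t + k)) := by
  refine Summable.of_norm_bounded (hηs.mul_right (γ ^ t * M)) fun k => ?_
  rw [Real.norm_eq_abs, abs_mul, abs_mul,
    abs_of_nonneg (pow_nonneg hγ0 t), abs_of_nonneg (hη0 k)]
  calc γ ^ t * η k * |u (t + k)| ≤ γ ^ t * η k * M := by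
        refine mul_le_mul_of_nonneg_left (hu _) ?_
        exact mul_nonneg (pow_nonneg hγ0 t) (hη0 k)
    _ = η k * (γ ^ t * M) := by ring

lemma abs_tsum_inner (hγ0 : 0 ≤ γ) (hη0 : ∀ k, 0 ≤ η k) (hηs : Summable η)
    (hη1 : ∑' k, η k = 1)
    {u : ℕ → ℝ} {M : ℝ} (hu : ∀ n, |u n| ≤ M) (t : ℕ) :
    |∑' k, γ ^ t * η k * u (t + k)| ≤ γ ^ t * M := by
  have hbound : ∀ k, ‖γ ^ t * η k * u (t + k)‖ ≤ η k * (γ ^ t * M) := by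
    intro k
    rw [Real.norm_eq_abs, abs_mul, abs_mul,
      abs_of_nonneg (pow_nonneg hγ0 t), abs_of_nonneg (hη0 k)]
    calc γ ^ t * η k * |u (t + k)| ≤ γ ^ t * η k * M :=
          mul_le_mul_of_nonneg_left (hu _) (mul_nonneg (pow_nonneg hγ0 t) (hη0 k))
      _ = η k * (γ ^ t * M) := by ring
  have hsn : Summable (fun k => ‖γ ^ t * η k * u (t + k)‖) := by
    refine Summable.of_nonneg_of_le (fun k => norm_nonneg _) hbound (hηs.mul_right _)
  calc |∑' k, γ ^ t * η k * u (t + k)| ≤ ∑' k, ‖γ ^ t * η k * u (t + k)‖ :=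
        norm_tsum_le_tsum_norm hsn
    _ ≤ ∑' k, η k * (γ ^ t * M) := hsn.tsum_le_tsum hbound (hηs.mul_right _)
    _ = γ ^ t * M := by rw [tsum_mul_right, hη1, one_mul]

lemma summable_outer (hγ0 : 0 ≤ γ) (hγ1 : γ < 1) (hη0 : ∀ k, 0 ≤ η k)
    (hηs : Summable η) (hη1 : ∑' k, η k = 1)
    {u : ℕ → ℝ} {M : ℝ} (hu : ∀ n, |u n| ≤ M) :
    Summable (fun t => ∑' k, γ ^ t * η k * u (t + k)) := by
  refine Summable.of_norm_bounded
    (((summable_geometric_of_lt_one hγ0 hγ1).mul_right M)) fun t => ?_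
  rw [Real.norm_eq_abs]
  exact abs_tsum_inner hγ0 hη0 hηs hη1 hu t

lemma sumA (hγ0 : 0 ≤ γ) (hγ1 : γ < 1) (hη0 : ∀ k, 0 ≤ η k)
    (hηs : Summable η) (hη1 : ∑' k, η k = 1) (s₀ : S) (f : S × A → ℝ) :
    ∑ x : S × A, muS P π γ η s₀ x * f x
      = ∑' t, ∑' k, γ ^ t * η k * Tf P π s₀ f (t + k) := by
  have hux : ∀ x : S × A, ∀ n, |PstepS P π n s₀ x * f x| ≤ |f x| := by
    intro x n
    rw [abs_mul, abs_of_nonneg (PstepS_nonneg P π n s₀ x)]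
    calc PstepS P π n s₀ x * |f x| ≤ 1 * |f x| :=
          mul_le_mul_of_nonneg_right (PstepS_le_one P π n s₀ x) (abs_nonneg _)
      _ = |f x| := one_mul _
  have hx : ∀ x : S × A, muS P π γ η s₀ x * f x
      = ∑' t, ∑' k, γ ^ t * η k * (PstepS P π (t + k) s₀ x * f x) := by
    intro x
    rw [muS, ← tsum_mul_right]
    refine tsum_congr fun t => ?_
    rw [← tsum_mul_right]
    exact tsum_congr fun k => by ring
  simp only [hx]
  rw [← Summable.tsum_finsetSum (fun x _ => summable_outer hγ0 hγ1 hη0 hηs hη1 (hux x))]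
  refine tsum_congr fun t => ?_
  rw [← Summable.tsum_finsetSum (fun x _ => summable_inner hγ0 hη0 hηs (hux x) t)]
  refine tsum_congr fun k => ?_
  rw [Tf, Finset.mul_sum]

lemma sumB (hη0 : ∀ k, 0 ≤ η k) (hηs : Summable η) (s₀ : S) (f : S × A → ℝ) :
    ∑ x : S × A, PetaS P π η s₀ x * f x = ∑' k, η k * Tf P π s₀ f k := by
  have hx : ∀ x : S × A, PetaS P π η s₀ x * f x
      = ∑' k, η k * (PstepS P π k s₀ x * f x) := by
    intro x
    rw [PetaS, ← tsum_mul_right]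
    exact tsum_congr fun k => by ring
  simp only [hx]
  rw [← Summable.tsum_finsetSum (fun x _ => ?_)]
  · refine tsum_congr fun k => ?_
    rw [Tf, Finset.mul_sum]
  · refine Summable.of_norm_bounded (hηs.mul_right |f x|) fun k => ?_
    rw [Real.norm_eq_abs, abs_mul, abs_of_nonneg (hη0 k)]
    refine mul_le_mul_of_nonneg_left ?_ (hη0 k)
    rw [abs_mul, abs_of_nonneg (PstepS_nonneg P π k s₀ x)]
    calc PstepS P π k s₀ x * |f x| ≤ 1 * |f x| :=
          mul_le_mul_of_nonneg_right (PstepS_le_one P π k s₀ x) (abs_nonneg _)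
      _ = |f x| := one_mul _

lemma key_telescope (hγ0 : 0 ≤ γ) (hγ1 : γ < 1) (hη0 : ∀ k, 0 ≤ η k)
    (hηs : Summable η) (hη1 : ∑' k, η k = 1) (s₀ : S) (v : S → ℝ) :
    γ * (∑ x : S × A, muS P π γ η s₀ x * ∑ s' : S, (P x s').toReal * v s')
      - ∑ x : S × A, muS P π γ η s₀ x * v x.1
      = - ∑ x : S × A, PetaS P π η s₀ x * v x.1 := by
  set V : S × A → ℝ := fun x => v x.1 with hV
  set W : S × A → ℝ := fun x => ∑ s' : S, (P x s').toReal * v s' with hW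
  have hTW : ∀ n, Tf P π s₀ W n = Tf P π s₀ V (n + 1) := by
    intro n
    rw [Tf, Tf]
    exact (PstepS_step P π n s₀ v).symm
  have hA_W := sumA P π hγ0 hγ1 hη0 hηs hη1 s₀ W
  have hA_V := sumA P π hγ0 hγ1 hη0 hηs hη1 s₀ V
  have hB := sumB P π hη0 hηs s₀ V
  rw [hA_W, hA_V, hB]
  set h : ℕ → ℝ := fun t => ∑' k, γ ^ t * η k * Tf P π s₀ V (t + k) with hh
  have huV : ∀ n, |Tf P π s₀ V n| ≤ ∑ x : S × A, |V x| := Tf_abs_le P π s₀ V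
  have hsum_h : Summable h := summable_outer hγ0 hγ1 hη0 hηs hη1 huV
  have h1 : γ * (∑' t, ∑' k, γ ^ t * η k * Tf P π s₀ W (t + k)) = ∑' t, h (t + 1) := by
    rw [← tsum_mul_left]
    refine tsum_congr fun t => ?_
    rw [← tsum_mul_left]
    refine tsum_congr fun k => ?_
    simp only [hh, hTW]
    rw [show t + k + 1 = t + 1 + k by omega]
    ring
  have h2 : ∑' t, h (t + 1) = (∑' t, h t) - h 0 := by
    have := Summable.tsum_eq_zero_add hsum_h
    linarith
  have h0eq : h 0 = ∑' k, η k * Tf P π s₀ V k := by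
    refine tsum_congr fun k => ?_
    simp
  rw [h1, h2, h0eq]
  ring

end tele


theorem stmt19 {S A : Type*} [Fintype S] [Fintype A] [Nonempty S] [Nonempty A]
    (P : S × A → PMF S) (γ : ℝ) (hγ : γ ∈ Set.Ioo (0 : ℝ) 1)
    (η : ℕ → ℝ) (hη0 : ∀ k, 0 ≤ η k) (hη1 : ∑' k, η k = 1)
    (c : S × A → ℝ) (p₀ : PMF S) (π π' : S → PMF A) :
    (∑ s₀ : S, (p₀ s₀).toReal *
        ∑ x : S × A, muS P π γ η s₀ x * advVal P π' γ c x) =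
      (∑ s₀ : S, (p₀ s₀).toReal *
        ∑ x : S × A, muS P π γ η s₀ x * c x) -
      ∑ s₀ : S, (p₀ s₀).toReal *
        ∑ x : S × A, PetaS P π η s₀ x * vVal P π' γ c x.1 := by
  have hγ0 : 0 ≤ γ := le_of_lt hγ.1
  have hγ1 : γ < 1 := hγ.2
  have hηs : Summable η := by
    by_contra hns
    rw [tsum_eq_zero_of_not_summable hns] at hη1
    norm_num at hη1
  have hkey : ∀ s₀ : S,
      ∑ x : S × A, muS P π γ η s₀ x * advVal P π' γ c x
        = (∑ x : S × A, muS P π γ η s₀ x * c x)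
          - ∑ x : S × A, PetaS P π η s₀ x * vVal P π' γ c x.1 := by
    intro s₀
    have hexp : ∀ x : S × A, muS P π γ η s₀ x * advVal P π' γ c x
        = muS P π γ η s₀ x * c x
          + γ * (muS P π γ η s₀ x * ∑ s' : S, (P x s').toReal * vVal P π' γ c s')
          - muS P π γ η s₀ x * vVal P π' γ c x.1 := by
      intro x; rw [advVal]; ring
    simp only [hexp]
    rw [Finset.sum_sub_distrib, Finset.sum_add_distrib, ← Finset.mul_sum]
    have hk := key_telescope P π hγ0 hγ1 hη0 hηs hη1 s₀ (vVal P π' γ c)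
    linarith
  simp only [hkey, mul_sub]
  rw [Finset.sum_sub_distrib]
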